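/- arXiv:1407.5605 — 2 statements merged into one kernel-verified Lean document; each statement's English description precedes it below -/
import Mathlib

section
/- Let μ and ν be finite signed measures on R^d \ {0} with total mass zero, such that the integrals of log|z-w| against μ × ν and against (φ_*μ) × (φ_*ν) are well-defined and finite, where φ(z) = z/|z|². Then ∫∫ log|z - w| dμ(z) dν(w) = ∫∫ log|φ(z) - φ(w)| dμ(z) dν(w). -/
open MeasureTheory

/-- The punctured Euclidean space `ℝ^d \ {0}`. -/
abbrev Punctured (d : ℕ) : Type := {x : EuclideanSpace ℝ (Fin d) // x ≠ 0}

/-- The inversion map `φ(z) = z / |z|²` on `ℝ^d \ {0}`. -/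
noncomputable def inversion {d : ℕ} (z : Punctured d) : Punctured d :=
  ⟨(‖z.1‖ ^ 2)⁻¹ • z.1,
    smul_ne_zero (inv_ne_zero (pow_ne_zero 2 (norm_ne_zero_iff.mpr z.2))) z.2⟩

/-- The positive (`true`) and negative (`false`) parts of the Jordan
decomposition of a signed measure. -/
noncomputable def part {α : Type*} [MeasurableSpace α] (μ : MeasureTheory.SignedMeasure α)
    (b : Bool) : Measure α :=
  if b then μ.toJordanDecomposition.posPart else μ.toJordanDecomposition.negPart

instance {α : Type*} [MeasurableSpace α] (μ : MeasureTheory.SignedMeasure α) (b : Bool) :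
    IsFiniteMeasure (part μ b) := by
  unfold part; cases b <;> simp <;> infer_instance

/-- The sign `±1` attached to each part. -/
def sgn (b : Bool) : ℝ := if b then 1 else -1

/-- The double integral `∫∫ K(z,w) dμ(z) dν(w)` of a kernel against a pair of
signed measures, expressed through Jordan decompositions. -/
noncomputable def doubleInt {α : Type*} [MeasurableSpace α]
    (μ ν : MeasureTheory.SignedMeasure α) (K : α → α → ℝ) : ℝ :=
  ∑ b₁ : Bool, ∑ b₂ : Bool,
    sgn b₁ * sgn b₂ * ∫ p, K p.1 p.2 ∂((part μ b₁).prod (part ν b₂))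

lemma inversion_norm {d : ℕ} (z w : Punctured d) :
    ‖(inversion z).1 - (inversion w).1‖ = ‖z.1 - w.1‖ / (‖z.1‖ * ‖w.1‖) := by
  have hz : ‖z.1‖ ≠ 0 := norm_ne_zero_iff.mpr z.2
  have hw : ‖w.1‖ ≠ 0 := norm_ne_zero_iff.mpr w.2
  have hsq : ‖(inversion z).1 - (inversion w).1‖ ^ 2
      = (‖z.1 - w.1‖ / (‖z.1‖ * ‖w.1‖)) ^ 2 := by
    rw [show (inversion z).1 = (‖z.1‖ ^ 2)⁻¹ • z.1 from rfl,
      show (inversion w).1 = (‖w.1‖ ^ 2)⁻¹ • w.1 from rfl]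
    rw [norm_sub_sq_real, div_pow, norm_sub_sq_real, real_inner_smul_left,
      real_inner_smul_right, norm_smul, norm_smul]
    simp only [norm_inv, norm_pow, norm_norm, mul_pow]
    field_simp
    ring
  have h1 : (0:ℝ) ≤ ‖(inversion z).1 - (inversion w).1‖ := norm_nonneg _
  have h2 : (0:ℝ) ≤ ‖z.1 - w.1‖ / (‖z.1‖ * ‖w.1‖) :=
    div_nonneg (norm_nonneg _) (mul_nonneg (norm_nonneg _) (norm_nonneg _))
  nlinarith [hsq]

lemma inversion_log {d : ℕ} (z w : Punctured d) (hne : z ≠ w) :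
    Real.log ‖(inversion z).1 - (inversion w).1‖
      = Real.log ‖z.1 - w.1‖ - Real.log ‖z.1‖ - Real.log ‖w.1‖ := by
  have hz : ‖z.1‖ ≠ 0 := norm_ne_zero_iff.mpr z.2
  have hw : ‖w.1‖ ≠ 0 := norm_ne_zero_iff.mpr w.2
  have hzw : ‖z.1 - w.1‖ ≠ 0 := by
    rw [norm_ne_zero_iff, sub_ne_zero]
    exact fun h => hne (Subtype.ext h)
  rw [inversion_norm, Real.log_div hzw (mul_ne_zero hz hw), Real.log_mul hz hw]
  ring

lemma integral_fst_aux {α : Type*} [MeasurableSpace α] (A B : Measure α)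
    [IsFiniteMeasure A] [IsFiniteMeasure B] (g : α → ℝ)
    (h : Integrable (fun p : α × α => g p.1) (A.prod B)) :
    ∫ p, g p.1 ∂(A.prod B) = (B Set.univ).toReal * ∫ x, g x ∂A := by
  rw [MeasureTheory.integral_prod _ h]
  simp only [integral_const, smul_eq_mul]
  simpa [Measure.real] using integral_smul (μ := A) (B Set.univ).toReal g

lemma integral_snd_aux {α : Type*} [MeasurableSpace α] (A B : Measure α)
    [IsFiniteMeasure A] [IsFiniteMeasure B] (g : α → ℝ)
    (h : Integrable (fun p : α × α => g p.2) (A.prod B)) :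
    ∫ p, g p.2 ∂(A.prod B) = (A Set.univ).toReal * ∫ x, g x ∂B := by
  rw [MeasureTheory.integral_prod _ h]
  simp [integral_const, Measure.real]

lemma mass_eq {α : Type*} [MeasurableSpace α] (σ : MeasureTheory.SignedMeasure α)
    (h : σ Set.univ = 0) :
    (part σ true Set.univ).toReal = (part σ false Set.univ).toReal := by
  have h1 : σ.toJordanDecomposition.toSignedMeasure Set.univ = 0 := by
    rw [σ.toSignedMeasure_toJordanDecomposition]; exact h
  rw [JordanDecomposition.toSignedMeasure, VectorMeasure.sub_apply,
    Measure.toSignedMeasure_apply_measurable MeasurableSet.univ,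
    Measure.toSignedMeasure_apply_measurable MeasurableSet.univ, sub_eq_zero] at h1
  simpa [part, Measure.real] using h1


/-- for finite signed measures `μ, ν` on `ℝ^d \ {0}` with total mass
zero, such that all the relevant double log-integrals are absolutely convergent
(and give no mass to the diagonal, so that the integrals are well-defined),
`∫∫ log|z - w| dμ(z) dν(w) = ∫∫ log|φ(z) - φ(w)| dμ(z) dν(w)` where
`φ(z) = z/|z|²` is the inversion. -/
theorem log_kernel_inversion_invariance (d : ℕ) (hd : 1 ≤ d)
    (μ ν : MeasureTheory.SignedMeasure (Punctured d))
    (hμ : μ Set.univ = 0) (hν : ν Set.univ = 0)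
    (hK : ∀ b₁ b₂ : Bool,
      Integrable (fun p : Punctured d × Punctured d => Real.log ‖p.1.1 - p.2.1‖)
        ((part μ b₁).prod (part ν b₂)))
    (hKφ : ∀ b₁ b₂ : Bool,
      Integrable (fun p : Punctured d × Punctured d =>
          Real.log ‖(inversion p.1).1 - (inversion p.2).1‖)
        ((part μ b₁).prod (part ν b₂)))
    (hz : ∀ b₁ b₂ : Bool,
      Integrable (fun p : Punctured d × Punctured d => Real.log ‖p.1.1‖)
        ((part μ b₁).prod (part ν b₂)))
    (hw : ∀ b₁ b₂ : Bool,
      Integrable (fun p : Punctured d × Punctured d => Real.log ‖p.2.1‖)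
        ((part μ b₁).prod (part ν b₂)))
    (hdiag : ∀ b₁ b₂ : Bool,
      ((part μ b₁).prod (part ν b₂)) {p : Punctured d × Punctured d | p.1 = p.2} = 0) :
    doubleInt μ ν (fun z w => Real.log ‖z.1 - w.1‖)
      = doubleInt μ ν (fun z w => Real.log ‖(inversion z).1 - (inversion w).1‖) := by
  have key : ∀ b₁ b₂ : Bool,
      (∫ p, Real.log ‖(inversion p.1).1 - (inversion p.2).1‖
          ∂((part μ b₁).prod (part ν b₂)))
        = (∫ p, Real.log ‖p.1.1 - p.2.1‖ ∂((part μ b₁).prod (part ν b₂)))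
          - (part ν b₂ Set.univ).toReal * (∫ x, Real.log ‖x.1‖ ∂(part μ b₁))
          - (part μ b₁ Set.univ).toReal * (∫ x, Real.log ‖x.1‖ ∂(part ν b₂)) := by
    intro b₁ b₂
    have hae : ∀ᵐ p ∂((part μ b₁).prod (part ν b₂)),
        (p : Punctured d × Punctured d).1 ≠ p.2 := by
      rw [ae_iff]
      simpa using hdiag b₁ b₂
    have hcongr : (∫ p, Real.log ‖(inversion p.1).1 - (inversion p.2).1‖
          ∂((part μ b₁).prod (part ν b₂)))
        = ∫ p, (Real.log ‖p.1.1 - p.2.1‖ - Real.log ‖p.1.1‖ - Real.log ‖p.2.1‖)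
          ∂((part μ b₁).prod (part ν b₂)) :=
      integral_congr_ae (hae.mono fun p hp => inversion_log _ _ hp)
    have e1 : ∫ p, (Real.log ‖p.1.1 - p.2.1‖ - Real.log ‖p.1.1‖ - Real.log ‖p.2.1‖)
          ∂((part μ b₁).prod (part ν b₂))
        = (∫ p, (Real.log ‖p.1.1 - p.2.1‖ - Real.log ‖p.1.1‖)
            ∂((part μ b₁).prod (part ν b₂)))
          - ∫ p, Real.log ‖p.2.1‖ ∂((part μ b₁).prod (part ν b₂)) :=
      integral_sub ((hK b₁ b₂).sub (hz b₁ b₂)) (hw b₁ b₂)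
    have e2 : ∫ p, (Real.log ‖p.1.1 - p.2.1‖ - Real.log ‖p.1.1‖)
          ∂((part μ b₁).prod (part ν b₂))
        = (∫ p, Real.log ‖p.1.1 - p.2.1‖ ∂((part μ b₁).prod (part ν b₂)))
          - ∫ p, Real.log ‖p.1.1‖ ∂((part μ b₁).prod (part ν b₂)) :=
      integral_sub (hK b₁ b₂) (hz b₁ b₂)
    have e3 : ∫ p, Real.log ‖p.1.1‖ ∂((part μ b₁).prod (part ν b₂))
        = (part ν b₂ Set.univ).toReal * ∫ x, Real.log ‖x.1‖ ∂(part μ b₁) :=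
      integral_fst_aux _ _ (fun x : Punctured d => Real.log ‖x.1‖) (hz b₁ b₂)
    have e4 : ∫ p, Real.log ‖p.2.1‖ ∂((part μ b₁).prod (part ν b₂))
        = (part μ b₁ Set.univ).toReal * ∫ x, Real.log ‖x.1‖ ∂(part ν b₂) :=
      integral_snd_aux _ _ (fun x : Punctured d => Real.log ‖x.1‖) (hw b₁ b₂)
    rw [hcongr, e1, e2, e3, e4]
  have hμ' := mass_eq μ hμ
  have hν' := mass_eq ν hν
  simp only [doubleInt, Fintype.sum_bool, sgn, key]
  norm_num
  linear_combination ((∫ x, Real.log ‖x.1‖ ∂(part μ true))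
      - (∫ x, Real.log ‖x.1‖ ∂(part μ false))) * hν'
    + ((∫ x, Real.log ‖x.1‖ ∂(part ν true))
      - (∫ x, Real.log ‖x.1‖ ∂(part ν false))) * hμ'
end

section
/- Let d ≥ 2 be even and let k be an integer. If k is even and 2 - d ≤ k ≤ d - 2, then Δ^{d/2} applied to g(x) = |x|^k vanishes on R^d \ {0}. -/
open scoped BigOperators

/-- The Laplacian on `ℝ^d`, as an operator on functions. -/
noncomputable def laplacian {d : ℕ} (f : EuclideanSpace ℝ (Fin d) → ℝ) :
    EuclideanSpace ℝ (Fin d) → ℝ := fun x =>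
  ∑ i : Fin d, iteratedFDeriv ℝ 2 f x ![EuclideanSpace.single i (1 : ℝ),
    EuclideanSpace.single i (1 : ℝ)]

section Aux
open RealInnerProductSpace
variable {d : ℕ}

noncomputable def B (d : ℕ) : EuclideanSpace ℝ (Fin d) →L[ℝ] EuclideanSpace ℝ (Fin d) →L[ℝ] ℝ :=
  (isBoundedBilinearMap_inner (𝕜 := ℝ) (E := EuclideanSpace ℝ (Fin d))).toContinuousLinearMap

lemma B_apply (x v : EuclideanSpace ℝ (Fin d)) : B d x v = ⟪x, v⟫ := rfl

lemma hasFDerivAt_normSq (z : EuclideanSpace ℝ (Fin d)) :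
    HasFDerivAt (fun z : EuclideanSpace ℝ (Fin d) => (‖z‖ : ℝ) ^ 2) ((2 : ℝ) • B d z) z := by
  have h := (hasFDerivAt_id z).inner ℝ (hasFDerivAt_id z)
  have hfun : (fun t : EuclideanSpace ℝ (Fin d) => ⟪t, t⟫) = fun t => (‖t‖ : ℝ) ^ 2 := by
    funext t; exact real_inner_self_eq_norm_sq t
  simp only [id] at h
  rw [hfun] at h
  refine h.congr_fderiv ?_
  ext v
  simp [B_apply, real_inner_comm, two_smul, fderivInnerCLM_apply]

noncomputable def Fm (d : ℕ) (c : ℝ) (m : ℤ) : EuclideanSpace ℝ (Fin d) → ℝ :=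
  fun z => c * ((‖z‖ : ℝ) ^ 2) ^ m

lemma hasFDerivAt_Fm (c : ℝ) (m : ℤ) {z : EuclideanSpace ℝ (Fin d)} (hz : z ≠ 0) :
    HasFDerivAt (Fm d c m) ((Fm d (2 * c * m) (m - 1) z) • B d z) z := by
  have hz' : ‖z‖ ≠ 0 := norm_ne_zero_iff.mpr hz
  have hQ : (‖z‖ : ℝ) ^ 2 ≠ 0 := pow_ne_zero 2 hz'
  have h1 := hasFDerivAt_normSq z
  have h2 := hasDerivAt_zpow m ((‖z‖ : ℝ) ^ 2) (Or.inl hQ)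
  have h3 := (h2.comp_hasFDerivAt z h1).const_mul c
  refine h3.congr_fderiv ?_
  rw [smul_smul, smul_smul, Fm]
  congr 1
  ring

lemma sum_fderiv_Fm (c : ℝ) (m : ℤ) {y : EuclideanSpace ℝ (Fin d)} (hy : y ≠ 0) :
    (∑ i : Fin d, fderiv ℝ (fderiv ℝ (Fm d c m)) y (EuclideanSpace.single i (1 : ℝ))
        (EuclideanSpace.single i (1 : ℝ)))
      = (2 * c * m) * (2 * m + d - 2) * ((‖y‖ : ℝ) ^ 2) ^ (m - 1) := by
  have hy' : ‖y‖ ≠ 0 := norm_ne_zero_iff.mpr hy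
  have hQ : (‖y‖ : ℝ) ^ 2 ≠ 0 := pow_ne_zero 2 hy'
  -- Φ is the derivative of Fm on the punctured space
  set Φ : EuclideanSpace ℝ (Fin d) → (EuclideanSpace ℝ (Fin d) →L[ℝ] ℝ) :=
    fun z => (Fm d (2 * c * m) (m - 1) z) • B d z with hΦ
  have hopen : {z : EuclideanSpace ℝ (Fin d) | z ≠ 0} ∈ nhds y :=
    (isOpen_compl_singleton).mem_nhds hy
  have hev : fderiv ℝ (Fm d c m) =ᶠ[nhds y] Φ :=
    Filter.eventually_of_mem hopen fun z hz => (hasFDerivAt_Fm c m hz).fderiv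
  -- Φ itself is differentiable at y with explicit derivative
  have hΦ' : HasFDerivAt Φ
      ((Fm d (2 * c * m) (m - 1) y) • (B d) +
        ((Fm d (2 * (2 * c * m) * ((m - 1 : ℤ) : ℝ)) (m - 1 - 1) y) • B d y).smulRight (B d y)) y := by
    have h2 : HasFDerivAt (fun z : EuclideanSpace ℝ (Fin d) => B d z) (B d) y :=
      (B d).hasFDerivAt
    exact (hasFDerivAt_Fm (2 * c * m) (m - 1) hy).smul h2
  have key : fderiv ℝ (fderiv ℝ (Fm d c m)) y = fderiv ℝ Φ y := hev.fderiv_eq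
  rw [key, hΦ'.fderiv]
  simp only [ContinuousLinearMap.add_apply, ContinuousLinearMap.smul_apply,
    ContinuousLinearMap.smulRight_apply, smul_eq_mul]
  have hB1 : ∀ i : Fin d, B d y (EuclideanSpace.single i (1 : ℝ)) = y i := by
    intro i
    rw [B_apply, EuclideanSpace.inner_single_right]
    simp
  have hB2 : ∀ i : Fin d, B d (EuclideanSpace.single i (1 : ℝ))
      (EuclideanSpace.single i (1 : ℝ)) = 1 := by
    intro i
    rw [B_apply, EuclideanSpace.inner_single_right]
    simp [EuclideanSpace.single_apply]
  simp only [hB1, hB2, mul_one]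
  rw [Finset.sum_add_distrib, Finset.sum_const, Finset.card_univ, Fintype.card_fin]
  have hsum : ∑ i : Fin d, Fm d (2 * (2 * c * ↑m) * ((m - 1 : ℤ) : ℝ)) (m - 1 - 1) y * y i * y i
      = Fm d (2 * (2 * c * ↑m) * ((m - 1 : ℤ) : ℝ)) (m - 1 - 1) y * ‖y‖ ^ 2 := by
    simp only [mul_assoc]
    rw [← Finset.mul_sum]
    congr 1
    rw [← real_inner_self_eq_norm_sq]
    simp [PiLp.inner_apply, RCLike.inner_apply, mul_assoc]
    rw [EuclideanSpace.norm_eq, Real.sq_sqrt (by positivity)]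
    simp [sq]
  rw [hsum]
  simp only [Fm]
  have hpow1 : ((‖y‖ : ℝ) ^ 2) ^ (m - 1 - 1) * ‖y‖ ^ 2 = ((‖y‖ : ℝ) ^ 2) ^ (m - 1) := by
    rw [← zpow_add_one₀ hQ]
    norm_num
  push_cast
  rw [nsmul_eq_mul, mul_comm (d : ℝ)]
  calc (2 * c * (m : ℝ) * ((‖y‖ : ℝ) ^ 2) ^ (m - 1)) * d
        + 2 * (2 * c * m) * ((m : ℝ) - 1) * ((‖y‖ : ℝ) ^ 2) ^ (m - 1 - 1) * ‖y‖ ^ 2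
      = (2 * c * (m : ℝ) * ((‖y‖ : ℝ) ^ 2) ^ (m - 1)) * d
        + 2 * (2 * c * m) * ((m : ℝ) - 1) * (((‖y‖ : ℝ) ^ 2) ^ (m - 1 - 1) * ‖y‖ ^ 2) := by ring
    _ = (2 * c * (m : ℝ) * ((‖y‖ : ℝ) ^ 2) ^ (m - 1)) * d
        + 2 * (2 * c * m) * ((m : ℝ) - 1) * ((‖y‖ : ℝ) ^ 2) ^ (m - 1) := by rw [hpow1]
    _ = 2 * c * (m : ℝ) * (2 * (m : ℝ) + d - 2) * ((‖y‖ : ℝ) ^ 2) ^ (m - 1) := by ring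

lemma laplacian_apply (f : EuclideanSpace ℝ (Fin d) → ℝ) (y : EuclideanSpace ℝ (Fin d)) :
    laplacian f y = ∑ i : Fin d, fderiv ℝ (fderiv ℝ f) y (EuclideanSpace.single i (1 : ℝ))
      (EuclideanSpace.single i (1 : ℝ)) := by
  unfold laplacian
  refine Finset.sum_congr rfl fun i _ => ?_
  rw [iteratedFDeriv_two_apply]
  simp

lemma laplacian_congr {f g : EuclideanSpace ℝ (Fin d) → ℝ} {y : EuclideanSpace ℝ (Fin d)}
    (h : f =ᶠ[nhds y] g) : laplacian f y = laplacian g y := by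
  rw [laplacian_apply, laplacian_apply]
  exact Finset.sum_congr rfl fun i _ => by rw [h.fderiv.fderiv_eq]

lemma laplacian_Fm (c : ℝ) (m : ℤ) {y : EuclideanSpace ℝ (Fin d)} (hy : y ≠ 0) :
    laplacian (Fm d c m) y = (2 * c * m) * (2 * m + d - 2) * ((‖y‖ : ℝ) ^ 2) ^ (m - 1) := by
  rw [laplacian_apply]
  exact sum_fderiv_Fm c m hy


end Aux

/-- Let `d ≥ 2` be even and `k` an integer.  If `k` is even and
`2 - d ≤ k ≤ d - 2`, then `Δ^(d/2)` applied to `g(x) = |x|^k` vanishes on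
`ℝ^d \ {0}`. -/
theorem iterated_laplacian_norm_zpow_eq_zero (d : ℕ) (hd : 2 ≤ d) (hdeven : Even d)
    (k : ℤ) (hk : Even k) (hk1 : 2 - (d : ℤ) ≤ k) (hk2 : k ≤ (d : ℤ) - 2)
    (x : EuclideanSpace ℝ (Fin d)) (hx : x ≠ 0) :
    (laplacian)^[d / 2] (fun y => ‖y‖ ^ k) x = 0 := by
  obtain ⟨m0, hm0⟩ := hk
  set φ : ℕ → ℝ := fun i => (2 * ((m0 : ℝ) - i)) * (2 * ((m0 : ℝ) - i) + d - 2) with hφ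
  have main : ∀ j : ℕ, ∀ y : EuclideanSpace ℝ (Fin d), y ≠ 0 →
      (laplacian)^[j] (fun y : EuclideanSpace ℝ (Fin d) => ‖y‖ ^ k) y
        = (∏ i ∈ Finset.range j, φ i) * ((‖y‖ : ℝ) ^ 2) ^ (m0 - (j : ℤ)) := by
    intro j
    induction j with
    | zero =>
      intro y hy
      have hy' : ‖y‖ ≠ 0 := norm_ne_zero_iff.mpr hy
      simp only [Function.iterate_zero, id, Finset.range_zero, Finset.prod_empty, one_mul]
      rw [hm0, Nat.cast_zero, sub_zero, zpow_add₀ hy', sq, mul_zpow]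
    | succ j ih =>
      intro y hy
      rw [Function.iterate_succ_apply']
      have hev : (laplacian)^[j] (fun y : EuclideanSpace ℝ (Fin d) => ‖y‖ ^ k)
          =ᶠ[nhds y] Fm d (∏ i ∈ Finset.range j, φ i) (m0 - j) :=
        Filter.eventually_of_mem ((isOpen_compl_singleton).mem_nhds hy) fun z hz => ih z hz
      rw [laplacian_congr hev, laplacian_Fm _ _ hy, Finset.prod_range_succ]
      have he : m0 - (j : ℤ) - 1 = m0 - ((j + 1 : ℕ) : ℤ) := by push_cast; ring
      rw [he]
      congr 1
      rw [hφ]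
      push_cast
      ring
  rw [main (d / 2) x hx]
  suffices hz : (∏ i ∈ Finset.range (d / 2), φ i) = 0 by rw [hz, zero_mul]
  obtain ⟨t, ht⟩ := hdeven
  have hdt : (d : ℤ) = t + t := by exact_mod_cast congrArg (Nat.cast : ℕ → ℤ) ht
  have hd2 : d / 2 = t := by omega
  rcases le_or_gt 0 m0 with hm | hm
  · have hcast : (m0.toNat : ℤ) = m0 := Int.toNat_of_nonneg hm
    refine Finset.prod_eq_zero (i := m0.toNat) ?_ ?_
    · rw [Finset.mem_range]
      omega
    · show 2 * ((m0 : ℝ) - (m0.toNat : ℕ)) * (2 * ((m0 : ℝ) - (m0.toNat : ℕ)) + d - 2) = 0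
      have : ((m0.toNat : ℕ) : ℝ) = (m0 : ℝ) := by exact_mod_cast congrArg (Int.cast : ℤ → ℝ) hcast
      rw [this]
      simp
  · set i := (m0 + t - 1).toNat with hi
    have hcast : (i : ℤ) = m0 + t - 1 := by
      rw [hi]
      refine Int.toNat_of_nonneg ?_
      omega
    refine Finset.prod_eq_zero (i := i) ?_ ?_
    · rw [Finset.mem_range]
      omega
    · show 2 * ((m0 : ℝ) - i) * (2 * ((m0 : ℝ) - i) + d - 2) = 0
      have h2 : 2 * ((m0 : ℝ) - i) + (d : ℝ) - 2 = 0 := by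
        have h3 : (2 * (m0 - (i : ℤ)) + d - 2 : ℤ) = 0 := by omega
        exact_mod_cast congrArg (Int.cast : ℤ → ℝ) h3
      rw [h2, mul_zero]
end
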